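/- If player A has a winning strategy in the Domino game Γ(𝒜, ℱ, ℤ^d) for a subshift of finite type (𝒜, ℱ), then A has a computable winning strategy. -/

import Mathlib

open Filter Topology

attribute [local instance] Classical.propDecidable

/-- The two players. -/
inductive Player | A | B
deriving DecidableEq

/-- A cell of the grid `ℤ^d`. -/
abbrev Cell (d : ℕ) := Fin d → ℤ

/-- A (possibly partial) colouring of the grid: `none` means uncoloured.
Colours are natural numbers; the alphabet of size `m` is `{0, …, m-1}`. -/
abbrev Board (d : ℕ) := Cell d → Option ℕ

/-- A finite pattern, encoded as a list of tiles (cell, colour). -/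
abbrev PatternCode (d : ℕ) := List (Cell d × ℕ)

/-- A move: `none` is a pass, `some (i, a)` colours cell `i` with colour `a`. -/
abbrev MoveD (d : ℕ) := Option (Cell d × ℕ)

/-- Code for an SFT: alphabet size together with the list of forbidden patterns. -/
abbrev SFTCode (d : ℕ) := ℕ × List (PatternCode d)

/-- A (positional) strategy: a move for every position. -/
abbrev Strategy (d : ℕ) := Board d → MoveD d

def emptyBoard (d : ℕ) : Board d := fun _ => none

/-- The pattern `p` occurs in the board `x` translated by `t`. -/
def occursAt {d : ℕ} (p : PatternCode d) (x : Board d) (t : Cell d) : Prop :=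
  ∀ q ∈ p, x (t + q.1) = some q.2

/-- A position is final when a translate of some forbidden pattern occurs. -/
def isFinal {d : ℕ} (F : List (PatternCode d)) (x : Board d) : Prop :=
  ∃ p ∈ F, ∃ t : Cell d, occursAt p x t

/-- Legality of a move in the game with alphabet `{0,…,m-1}` played on `E`:
a pass is always legal, and a colouring move must pick an uncoloured cell of `E`
and a colour of the alphabet. -/
def legalMove {d : ℕ} (m : ℕ) (E : Set (Cell d)) (x : Board d) : MoveD d → Prop
  | none => True
  | some (i, a) => i ∈ E ∧ x i = none ∧ a < m

def applyMove {d : ℕ} (x : Board d) : MoveD d → Board d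
  | none => x
  | some (i, a) => Function.update x i (some a)

/-- One step of the game: the move proposed by the strategy is played if legal
(an illegal move is treated as a pass). -/
noncomputable def step {d : ℕ} (m : ℕ) (E : Set (Cell d)) (st : Strategy d)
    (x : Board d) : Board d :=
  if legalMove m E x (st x) then applyMove x (st x) else x

/-- The play generated by strategies `stA`, `stB` with turn order `s`,
starting from the empty board. -/
noncomputable def play {d : ℕ} (m : ℕ) (E : Set (Cell d)) (s : ℕ → Player)
    (stA stB : Strategy d) : ℕ → Board d
  | 0 => emptyBoard d
  | t + 1 => step m E (match s t with | .A => stA | .B => stB) (play m E s stA stB t)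

/-- The alternating turn order: `A` plays first. -/
def alt : ℕ → Player := fun t => if t % 2 = 0 then .A else .B

/-- Player `A` has a winning strategy in the Domino game with turn order `s`:
a final position is eventually reached whatever `B` plays. -/
def AWins {d : ℕ} (m : ℕ) (F : List (PatternCode d)) (E : Set (Cell d))
    (s : ℕ → Player) : Prop :=
  ∃ stA : Strategy d, ∀ stB : Strategy d, ∃ t : ℕ, isFinal F (play m E s stA stB t)

/-- Player `B` has a winning strategy in the Domino game with turn order `s`:
a final position is never reached whatever `A` plays. -/
def BWins {d : ℕ} (m : ℕ) (F : List (PatternCode d)) (E : Set (Cell d))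
    (s : ℕ → Player) : Prop :=
  ∃ stB : Strategy d, ∀ stA : Strategy d, ∀ t : ℕ, ¬ isFinal F (play m E s stA stB t)

/-- The Domino game problem on `ℤ^d` (alternating turn order, `A` first). -/
def DGame (d : ℕ) : SFTCode d → Prop :=
  fun c => AWins c.1 c.2 Set.univ alt

/-- The finite board (pattern) encoded by a list of tiles. -/
noncomputable def toBoard {d : ℕ} (l : PatternCode d) : Board d :=
  fun i => (l.find? (fun q => decide (q.1 = i))).map Prod.snd

/-- A strategy is computable if it is computable under the standard encoding of
finite patterns as lists of tiles. -/
def ComputableStrategy {d : ℕ} (st : Strategy d) : Prop :=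
  ∃ f : PatternCode d → MoveD d, Computable f ∧ ∀ l : PatternCode d, f l = st (toBoard l)

/- ========================= auxiliary development ========================= -/

namespace DG

variable {d : ℕ}

/-- Chebyshev distance on `ℤ^d`. -/
def dd (u v : Cell d) : ℕ := Finset.univ.sup fun i => (u i - v i).natAbs

lemma dd_self (u : Cell d) : dd u u = 0 := by
  simp [dd]

lemma dd_comm (u v : Cell d) : dd u v = dd v u := by
  unfold dd; congr 1; funext i; rw [← Int.natAbs_neg]; ring_nf

lemma coord_le_dd (u v : Cell d) (i : Fin d) : (u i - v i).natAbs ≤ dd u v :=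
  Finset.le_sup (f := fun i => (u i - v i).natAbs) (Finset.mem_univ i)

lemma dd_le (u v : Cell d) {n : ℕ} (h : ∀ i, (u i - v i).natAbs ≤ n) : dd u v ≤ n :=
  Finset.sup_le fun i _ => h i

lemma dd_triangle (u v w : Cell d) : dd u w ≤ dd u v + dd v w := by
  refine dd_le _ _ fun i => ?_
  have : u i - w i = (u i - v i) + (v i - w i) := by ring
  rw [this]
  exact le_trans (Int.natAbs_add_le _ _)
    (Nat.add_le_add (coord_le_dd u v i) (coord_le_dd v w i))

lemma dd_eq_zero {u v : Cell d} (h : dd u v = 0) : u = v := by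
  funext i
  have := coord_le_dd u v i
  rw [h, Nat.le_zero, Int.natAbs_eq_zero, sub_eq_zero] at this
  exact this

lemma dd_of_sub_eq {u u' v v' : Cell d} (h : u' - u = v' - v) : dd u u' = dd v v' := by
  unfold dd; congr 1; funext i
  have : u i - u' i = v i - v' i := by
    have := congrFun h i
    simp only [Pi.sub_apply] at this
    linarith
  rw [this]

lemma dd_add_right (u v w : Cell d) : dd (u + w) (v + w) = dd u v := by
  unfold dd; congr 1; funext i; simp

/-- Support of a board. -/
def supp (x : Board d) : Set (Cell d) := {c | x c ≠ none}

lemma supp_apply_some (x : Board d) (c : Cell d) (a : ℕ) :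
    supp (applyMove x (some (c, a))) = insert c (supp x) := by
  ext e
  simp only [supp, applyMove, Set.mem_setOf_eq, Set.mem_insert_iff, Function.update_apply]
  by_cases h : e = c <;> simp [h]

lemma apply_none (x : Board d) : applyMove x none = x := rfl

lemma apply_some (x : Board d) (c : Cell d) (a : ℕ) (e : Cell d) :
    applyMove x (some (c, a)) e = if e = c then some a else x e := by
  simp [applyMove, Function.update_apply]

section Game

variable (m : ℕ) (F : List (PatternCode d))

/-- bound on pattern radius -/
def R0 : ℕ := (F.map (fun p => (p.map (fun q => dd q.1 0)).foldr max 0)).foldr max 0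

def Rb : ℕ := 2 * R0 F

/-- interaction scales -/
def D (k : ℕ) : ℕ := (Rb F + 2) * 3 ^ k

lemma D_pos (k : ℕ) : 0 < D F k := by
  have h3 : 0 < 3 ^ k := Nat.pow_pos (by norm_num)
  have : 0 < Rb F + 2 := by omega
  exact Nat.mul_pos this h3

lemma D_succ (k : ℕ) : D F (k + 1) = 3 * D F k := by
  simp [D, pow_succ]; ring

lemma D_mono {j k : ℕ} (h : j ≤ k) : D F j ≤ D F k := by
  unfold D
  exact Nat.mul_le_mul_left _ (Nat.pow_le_pow_right (by norm_num) h)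

lemma le_foldr_max (L : List ℕ) (a : ℕ) (h : a ∈ L) : a ≤ L.foldr max 0 := by
  induction L with
  | nil => simp at h
  | cons b L ih =>
    rcases List.mem_cons.1 h with rfl | h
    · exact le_max_left _ _
    · exact le_trans (ih h) (le_max_right _ _)

lemma pattern_radius {p : PatternCode d} (hp : p ∈ F) {q : Cell d × ℕ} (hq : q ∈ p) :
    dd q.1 0 ≤ R0 F := by
  have h1 : dd q.1 0 ∈ p.map (fun q => dd q.1 0) := List.mem_map_of_mem hq
  have h2 : (p.map (fun q => dd q.1 0)).foldr max 0 ∈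
      F.map (fun p => (p.map (fun q => dd q.1 0)).foldr max 0) := List.mem_map_of_mem hp
  exact le_trans (le_foldr_max _ _ h1) (le_foldr_max _ _ h2)

lemma pattern_diam {p : PatternCode d} (hp : p ∈ F) {q q' : Cell d × ℕ}
    (hq : q ∈ p) (hq' : q' ∈ p) (t : Cell d) : dd (t + q.1) (t + q'.1) ≤ Rb F := by
  have h1 : dd (t + q.1) (t + q'.1) = dd q.1 q'.1 := by
    apply dd_of_sub_eq; abel
  rw [h1, Rb, two_mul]
  calc dd q.1 q'.1 ≤ dd q.1 0 + dd 0 q'.1 := dd_triangle _ _ _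
    _ ≤ R0 F + R0 F := by
        refine Nat.add_le_add (pattern_radius F hp hq) ?_
        rw [dd_comm]; exact pattern_radius F hp hq'

lemma Rb_le_D (k : ℕ) : Rb F ≤ D F k := by
  have : Rb F + 2 ≤ D F k := by
    have : 1 ≤ 3 ^ k := Nat.one_le_pow _ _ (by norm_num)
    calc Rb F + 2 = (Rb F + 2) * 1 := by ring
      _ ≤ (Rb F + 2) * 3 ^ k := Nat.mul_le_mul_left _ this
  omega

/-- whether a move stays inside a window. -/
def inW (Ws : Set (Cell d)) : MoveD d → Prop
  | none => True
  | some q => q.1 ∈ Ws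

/-- The bounded-depth game value: `WW Ws k P x` holds iff the player `A` (to move if
`P = true`, with opponent to move if `P = false`) can force a final position within `k`
further moves, all moves being played inside `Ws`. -/
def WW (Ws : Set (Cell d)) : ℕ → Bool → Board d → Prop
  | 0, _, x => isFinal F x
  | k+1, true, x => isFinal F x ∨
      ∃ mv, legalMove m Set.univ x mv ∧ inW Ws mv ∧ WW Ws k false (applyMove x mv)
  | k+1, false, x => isFinal F x ∨
      ∀ mv, legalMove m Set.univ x mv → inW Ws mv → WW Ws k true (applyMove x mv)

lemma WW_mono (Ws : Set (Cell d)) : ∀ (k : ℕ) (P : Bool) (x : Board d),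
    WW m F Ws k P x → WW m F Ws (k + 1) P x := by
  intro k
  induction k with
  | zero =>
    intro P x hx
    cases P
    · exact Or.inl hx
    · exact Or.inl hx
  | succ k ih =>
    intro P x hx
    cases P with
    | true =>
      rcases hx with hf | ⟨mv, hl, hw, hx⟩
      · exact Or.inl hf
      · exact Or.inr ⟨mv, hl, hw, ih false _ hx⟩
    | false =>
      rcases hx with hf | hall
      · exact Or.inl hf
      · exact Or.inr fun mv hl hw => ih true _ (hall mv hl hw)

lemma WW_mono_le (Ws : Set (Cell d)) {j k : ℕ} (h : j ≤ k) (P : Bool) (x : Board d) :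
    WW m F Ws j P x → WW m F Ws k P x := by
  induction k with
  | zero => intro hx; rwa [Nat.le_zero.1 h] at hx
  | succ k ih =>
    intro hx
    rcases Nat.le_succ_iff.mp h  with h' | rfl
    · exact WW_mono m F Ws k P x (ih h' hx)
    · exact hx

/-- The transport relation: `y` contains a piecewise-translated copy of `x`
(blocks rigid at scale `D k`), everything else in `y` being far away junk,
with images deep inside the window `Ws`. -/
structure Rel (Ws : Set (Cell d)) (SZ : ℕ) (k : ℕ) (x y : Board d) (τ : Cell d → Cell d) :
    Prop where
  t1 : ∀ c ∈ supp x, y (τ c) = x c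
  t2 : ∀ c ∈ supp x, ∀ c' ∈ supp x, dd c c' ≤ D F k → τ c' - τ c = c' - c
  t3 : ∀ c ∈ supp x, ∀ c' ∈ supp x, D F k < dd c c' → D F k < dd (τ c) (τ c')
  t4 : ∀ e ∈ supp y, (∀ c ∈ supp x, τ c ≠ e) → ∀ c ∈ supp x, D F k < dd e (τ c)
  t5 : ∀ c ∈ supp x, ∀ e, dd e (τ c) ≤ D F k → e ∈ Ws
  t6 : ∀ j ≤ k, ∀ S : Finset (Cell d), S.card ≤ SZ →
      ∃ e, (∀ s ∈ S, D F j < dd e s) ∧ (∀ e', dd e' e ≤ D F j → e' ∈ Ws)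
  fin : ∃ sy : Finset (Cell d), (↑sy = supp y) ∧ sy.card + k ≤ SZ

lemma D_lt_D_succ (k : ℕ) : D F k < D F (k + 1) := by
  have h1 := D_pos F k
  have h2 := D_succ F k
  omega

lemma relMono {Ws : Set (Cell d)} {SZ k x y τ} (h : Rel F Ws SZ (k+1) x y τ) :
    Rel F Ws SZ k x y τ := by
  have hD : D F k ≤ D F (k+1) := (D_lt_D_succ F k).le
  refine ⟨?_, ?_, ?_, ?_, ?_, ?_, ?_⟩
  · exact h.t1
  · intro c hc c' hc' hdd
    exact h.t2 c hc c' hc' (le_trans hdd hD)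
  · intro c hc c' hc' hdd
    by_cases hcase : dd c c' ≤ D F (k+1)
    · have := h.t2 c hc c' hc' hcase
      have heq : dd (τ c) (τ c') = dd c c' := dd_of_sub_eq this
      omega
    · have := h.t3 c hc c' hc' (by omega)
      omega
  · intro e he hni c hc
    have := h.t4 e he hni c hc
    omega
  · intro c hc e hdd
    exact h.t5 c hc e (le_trans hdd hD)
  · intro j hj S hS
    exact h.t6 j (by omega) S hS
  · obtain ⟨sy, h1, h2⟩ := h.fin
    exact ⟨sy, h1, by omega⟩

lemma final_transport {Ws : Set (Cell d)} {SZ k x y τ} (h : Rel F Ws SZ k x y τ)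
    (hf : isFinal F x) : isFinal F y := by
  obtain ⟨p, hp, t, hocc⟩ := hf
  cases p with
  | nil => exact ⟨[], hp, 0, fun q hq => absurd hq List.not_mem_nil⟩
  | cons q0 p' =>
    set p := q0 :: p' with hpdef
    have hmem : ∀ q ∈ p, (t + q.1) ∈ supp x := by
      intro q hq
      simp only [supp, Set.mem_setOf_eq, hocc q hq]
      exact fun hcon => by simp at hcon
    have hcs : (t + q0.1) ∈ supp x := hmem q0 (List.mem_cons_self)
    have key : ∀ q ∈ p, τ (t + q.1) = (t + q.1) + (τ (t + q0.1) - (t + q0.1)) := by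
      intro q hq
      have hdd : dd (t + q0.1) (t + q.1) ≤ D F k :=
        le_trans (pattern_diam F hp (List.mem_cons_self) hq t) (Rb_le_D F k)
      have h2 := h.t2 _ hcs _ (hmem q hq) hdd
      rw [sub_eq_iff_eq_add] at h2
      rw [h2]; abel
    refine ⟨p, hp, t + (τ (t + q0.1) - (t + q0.1)), fun q hq => ?_⟩
    have harr : t + (τ (t + q0.1) - (t + q0.1)) + q.1 = τ (t + q.1) := by
      rw [key q hq]; abel
    rw [harr, h.t1 _ (hmem q hq)]
    exact hocc q hq

lemma relExtNear {Ws : Set (Cell d)} {SZ k : ℕ} {x y : Board d} {τ : Cell d → Cell d}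
    (h : Rel F Ws SZ (k+1) x y τ) {c c₀ : Cell d} (a : ℕ)
    (hc₀ : c₀ ∈ supp x) (hcc₀ : dd c c₀ ≤ D F k) (hc : x c = none)
    (hyc' : y (c + (τ c₀ - c₀)) = none) :
    (c + (τ c₀ - c₀)) ∈ Ws ∧
    Rel F Ws SZ k (applyMove x (some (c, a))) (applyMove y (some (c + (τ c₀ - c₀), a)))
      (Function.update τ c (c + (τ c₀ - c₀))) := by
  have hDlt := D_lt_D_succ F k
  have hD3 := D_succ F k
  have hDpos := D_pos F k
  have hcx : c ∉ supp x := fun hmem => hmem hc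
  have hne_c : ∀ u ∈ supp x, u ≠ c := by
    intro u hu h'
    subst h'
    exact hcx hu
  have hsx : supp (applyMove x (some (c,a))) = insert c (supp x) := supp_apply_some x c a
  have himg_supp : ∀ u ∈ supp x, τ u ∈ supp y := by
    intro u hu
    show y (τ u) ≠ none
    rw [h.t1 u hu]
    exact hu
  have hcc₀' : dd c₀ c ≤ D F k := by rw [dd_comm]; exact hcc₀
  set w := τ c₀ - c₀ with hw
  have hτc₀ : τ c₀ = c₀ + w := by rw [hw]; abel
  have N1 : ∀ u ∈ supp x, dd c₀ u ≤ D F (k+1) → τ u = u + w := by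
    intro u hu hdu
    have h2 := h.t2 c₀ hc₀ u hu hdu
    rw [sub_eq_iff_eq_add] at h2
    rw [h2, hw]; abel
  have N2 : dd (c + w) (τ c₀) = dd c c₀ := by
    apply dd_of_sub_eq
    rw [hτc₀]; abel
  have N2' : dd (τ c₀) (c + w) = dd c c₀ := by rw [dd_comm]; exact N2
  have key : ∀ v ∈ supp x, dd c v ≤ D F k → τ v = v + w := by
    intro v hv hcv
    refine N1 v hv ?_
    have htri := dd_triangle c₀ c v
    omega
  have hsy : supp (applyMove y (some (c+w,a))) = insert (c+w) (supp y) :=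
    supp_apply_some y (c+w) a
  have hc'W : (c + w) ∈ Ws := h.t5 c₀ hc₀ (c+w) (by rw [N2]; omega)
  refine ⟨hc'W, ?_, ?_, ?_, ?_, ?_, ?_, ?_⟩
  · -- t1
    intro u hu
    rw [hsx, Set.mem_insert_iff] at hu
    rcases hu with hu | hu
    · subst u
      rw [Function.update_self, apply_some, if_pos rfl, apply_some, if_pos rfl]
    · have hne : u ≠ c := hne_c u hu
      have hτune : τ u ≠ c + w := by
        intro h'
        have h1 := h.t1 u hu
        rw [h', hyc'] at h1
        exact hu h1.symm
      rw [Function.update_of_ne hne, apply_some, if_neg hτune, apply_some, if_neg hne,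
        h.t1 u hu]
  · -- t2
    intro u hu u' hu' hdd
    rw [hsx, Set.mem_insert_iff] at hu hu'
    rcases hu with hu | hu <;> rcases hu' with hu' | hu'
    · subst u; subst u'; simp
    · subst u
      have hne' : u' ≠ c := hne_c u' hu'
      rw [Function.update_self, Function.update_of_ne hne', key u' hu' hdd]
      abel
    · subst u'
      have hne : u ≠ c := hne_c u hu
      rw [Function.update_self, Function.update_of_ne hne,
        key u hu (by rw [dd_comm]; exact hdd)]
      abel
    · rw [Function.update_of_ne (hne_c u hu),
        Function.update_of_ne (hne_c u' hu')]
      exact h.t2 u hu u' hu' (by omega)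
  · -- t3
    intro u hu u' hu' hdd
    rw [hsx, Set.mem_insert_iff] at hu hu'
    rcases hu with hu | hu <;> rcases hu' with hu' | hu'
    · subst u; subst u'; rw [dd_self] at hdd; omega
    · subst u
      have hne' : u' ≠ c := hne_c u' hu'
      rw [Function.update_self, Function.update_of_ne hne']
      by_cases hdu : dd c₀ u' ≤ D F (k+1)
      · rw [N1 u' hu' hdu, dd_add_right]
        exact hdd
      · have h3 := h.t3 c₀ hc₀ u' hu' (by omega)
        have htri := dd_triangle (τ c₀) (c + w) (τ u')
        omega
    · subst u'
      have hne : u ≠ c := hne_c u hu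
      rw [Function.update_self, Function.update_of_ne hne]
      have hdd' : D F k < dd c u := by rw [dd_comm]; exact hdd
      by_cases hdu : dd c₀ u ≤ D F (k+1)
      · rw [N1 u hu hdu, dd_add_right]
        exact hdd
      · have h3 := h.t3 c₀ hc₀ u hu (by omega)
        have htri := dd_triangle (τ c₀) (c + w) (τ u)
        rw [dd_comm]
        omega
    · rw [Function.update_of_ne (hne_c u hu),
        Function.update_of_ne (hne_c u' hu')]
      by_cases hcase : dd u u' ≤ D F (k+1)
      · rw [dd_of_sub_eq (h.t2 u hu u' hu' hcase)]
        exact hdd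
      · have := h.t3 u hu u' hu' (by omega)
        omega
  · -- t4
    intro e he hni u hu
    rw [hsy, Set.mem_insert_iff] at he
    rw [hsx, Set.mem_insert_iff] at hu
    have hec' : e ≠ c + w := by
      intro h'
      exact (hni c (by rw [hsx]; exact Set.mem_insert _ _)) (by rw [Function.update_self, h'])
    rcases he with rfl | he
    · exact absurd rfl hec'
    · have hni' : ∀ v ∈ supp x, τ v ≠ e := by
        intro v hv
        have hvne : v ≠ c := hne_c v hv
        have := hni v (by rw [hsx]; exact Set.mem_insert_of_mem _ hv)
        rwa [Function.update_of_ne hvne] at this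
      rcases hu with hu | hu
      · subst u
        rw [Function.update_self]
        have h4 := h.t4 e he hni' c₀ hc₀
        have htri := dd_triangle e (c + w) (τ c₀)
        rw [N2] at htri
        omega
      · rw [Function.update_of_ne (hne_c u hu)]
        have := h.t4 e he hni' u hu
        omega
  · -- t5
    intro u hu e hdd
    rw [hsx, Set.mem_insert_iff] at hu
    rcases hu with hu | hu
    · subst u
      rw [Function.update_self] at hdd
      refine h.t5 c₀ hc₀ e ?_
      have htri := dd_triangle e (c + w) (τ c₀)
      rw [N2] at htri
      omega
    · rw [Function.update_of_ne (hne_c u hu)] at hdd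
      exact h.t5 u hu e (by omega)
  · -- t6
    intro j hj S hS
    exact h.t6 j (by omega) S hS
  · -- fin
    obtain ⟨sy, hsy', hcard⟩ := h.fin
    refine ⟨insert (c+w) sy, ?_, ?_⟩
    · rw [Finset.coe_insert, hsy', hsy]
    · have := Finset.card_insert_le (c+w) sy
      omega


lemma extF {Ws : Set (Cell d)} {SZ k x y τ} (h : Rel F Ws SZ (k+1) x y τ)
    {c : Cell d} {a : ℕ} (hc : x c = none) (ha : a < m) :
    ∃ c', y c' = none ∧ c' ∈ Ws ∧
      Rel F Ws SZ k (applyMove x (some (c, a))) (applyMove y (some (c', a)))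
        (Function.update τ c c') := by
  have hDlt := D_lt_D_succ F k
  have hD3 := D_succ F k
  have hDpos := D_pos F k
  have hcx : c ∉ supp x := fun hmem => hmem hc
  have hne_c : ∀ u ∈ supp x, u ≠ c := by
    intro u hu h'
    subst h'
    exact hcx hu
  have hsx : supp (applyMove x (some (c,a))) = insert c (supp x) := supp_apply_some x c a
  have himg_supp : ∀ u ∈ supp x, τ u ∈ supp y := by
    intro u hu
    show y (τ u) ≠ none
    rw [h.t1 u hu]
    exact hu
  by_cases hnear : ∃ c₀ ∈ supp x, dd c c₀ ≤ D F k
  · obtain ⟨c₀, hc₀, hcc₀⟩ := hnear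
    set w := τ c₀ - c₀ with hw
    have hτc₀ : τ c₀ = c₀ + w := by rw [hw]; abel
    have N1 : ∀ u ∈ supp x, dd c₀ u ≤ D F (k+1) → τ u = u + w := by
      intro u hu hdu
      have h2 := h.t2 c₀ hc₀ u hu hdu
      rw [sub_eq_iff_eq_add] at h2
      rw [h2, hw]; abel
    have N2 : dd (c + w) (τ c₀) = dd c c₀ := by
      apply dd_of_sub_eq
      rw [hτc₀]; abel
    have N2' : dd (τ c₀) (c + w) = dd c c₀ := by rw [dd_comm]; exact N2
    have hyc' : y (c + w) = none := by
      by_cases himg : ∃ u ∈ supp x, τ u = c + w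
      · obtain ⟨u, hu, hτu⟩ := himg
        by_cases hdu : dd c₀ u ≤ D F (k+1)
        · rw [N1 u hu hdu] at hτu
          have : u = c := add_right_cancel hτu
          exact absurd this (hne_c u hu)
        · have h3 := h.t3 c₀ hc₀ u hu (by omega)
          rw [hτu] at h3
          omega
      · by_contra hne
        push_neg at himg
        have := h.t4 (c+w) hne (fun u hu => himg u hu) c₀ hc₀
        rw [N2] at this
        omega
    obtain ⟨hW, hrel⟩ := relExtNear F h a hc₀ hcc₀ hc hyc'
    exact ⟨c + w, hyc', hW, hrel⟩
  · -- FAR case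
    push_neg at hnear
    obtain ⟨sy, hsy', hcard⟩ := h.fin
    obtain ⟨e, he1, he2⟩ := h.t6 k (Nat.le_succ k) sy (by omega)
    have he1' : ∀ s ∈ supp y, D F k < dd e s := by
      intro s hs
      refine he1 s ?_
      rw [← hsy'] at hs
      exact hs
    have hye : y e = none := by
      by_contra hne
      have h1 := he1' e hne
      rw [dd_self] at h1
      omega
    have heW : e ∈ Ws := he2 e (by rw [dd_self]; exact Nat.zero_le _)
    have hsy : supp (applyMove y (some (e,a))) = insert e (supp y) :=
      supp_apply_some y e a
    have hτu_ne : ∀ u ∈ supp x, τ u ≠ e := by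
      intro u hu h'
      have h1 := he1' (τ u) (himg_supp u hu)
      rw [← h', dd_self] at h1
      omega
    refine ⟨e, hye, heW, ?_, ?_, ?_, ?_, ?_, ?_, ?_⟩
    · -- t1
      intro u hu
      rw [hsx, Set.mem_insert_iff] at hu
      rcases hu with hu | hu
      · subst u
        rw [Function.update_self, apply_some, if_pos rfl, apply_some, if_pos rfl]
      · have hne : u ≠ c := hne_c u hu
        rw [Function.update_of_ne hne, apply_some, if_neg (hτu_ne u hu), apply_some,
          if_neg hne, h.t1 u hu]
    · -- t2
      intro u hu u' hu' hdd
      rw [hsx, Set.mem_insert_iff] at hu hu'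
      rcases hu with hu | hu <;> rcases hu' with hu' | hu'
      · subst u; subst u'; simp
      · subst u
        exact absurd hdd (by have := hnear u' hu'; omega)
      · subst u'
        exact absurd hdd (by have := hnear u hu; rw [dd_comm]; omega)
      · rw [Function.update_of_ne (hne_c u hu),
          Function.update_of_ne (hne_c u' hu')]
        exact h.t2 u hu u' hu' (by omega)
    · -- t3
      intro u hu u' hu' hdd
      rw [hsx, Set.mem_insert_iff] at hu hu'
      rcases hu with hu | hu <;> rcases hu' with hu' | hu'
      · subst u; subst u'; rw [dd_self] at hdd; omega
      · subst u
        rw [Function.update_self, Function.update_of_ne (hne_c u' hu')]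
        exact he1' (τ u') (himg_supp u' hu')
      · subst u'
        rw [Function.update_self, Function.update_of_ne (hne_c u hu)]
        rw [dd_comm]
        exact he1' (τ u) (himg_supp u hu)
      · rw [Function.update_of_ne (hne_c u hu),
          Function.update_of_ne (hne_c u' hu')]
        by_cases hcase : dd u u' ≤ D F (k+1)
        · rw [dd_of_sub_eq (h.t2 u hu u' hu' hcase)]
          exact hdd
        · have := h.t3 u hu u' hu' (by omega)
          omega
    · -- t4
      intro e' he' hni u hu
      rw [hsy, Set.mem_insert_iff] at he'
      rw [hsx, Set.mem_insert_iff] at hu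
      have hee' : e' ≠ e := by
        intro h'
        exact (hni c (by rw [hsx]; exact Set.mem_insert _ _)) (by rw [Function.update_self, h'])
      rcases he' with rfl | he'
      · exact absurd rfl hee'
      · have hni' : ∀ v ∈ supp x, τ v ≠ e' := by
          intro v hv
          have hvne : v ≠ c := hne_c v hv
          have := hni v (by rw [hsx]; exact Set.mem_insert_of_mem _ hv)
          rwa [Function.update_of_ne hvne] at this
        rcases hu with hu | hu
        · subst u
          rw [Function.update_self]
          have h1 := he1' e' he'
          rw [dd_comm] at h1
          exact h1
        · rw [Function.update_of_ne (hne_c u hu)]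
          have := h.t4 e' he' hni' u hu
          omega
    · -- t5
      intro u hu e' hdd
      rw [hsx, Set.mem_insert_iff] at hu
      rcases hu with hu | hu
      · subst u
        rw [Function.update_self] at hdd
        exact he2 e' hdd
      · rw [Function.update_of_ne (hne_c u hu)] at hdd
        exact h.t5 u hu e' (by omega)
    · -- t6
      intro j hj S hS
      exact h.t6 j (by omega) S hS
    · -- fin
      refine ⟨insert e sy, ?_, ?_⟩
      · rw [Finset.coe_insert, hsy', hsy]
      · have := Finset.card_insert_le e sy
        omega

lemma extB {Ws : Set (Cell d)} {SZ k x y τ} (h : Rel F Ws SZ (k+1) x y τ)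
    {c' : Cell d} {a : ℕ} (hc' : y c' = none) (ha : a < m) :
    (∃ c, x c = none ∧
      Rel F Ws SZ k (applyMove x (some (c, a))) (applyMove y (some (c', a)))
        (Function.update τ c c')) ∨
    Rel F Ws SZ k x (applyMove y (some (c', a))) τ := by
  have hDlt := D_lt_D_succ F k
  have hDpos := D_pos F k
  have himg_supp : ∀ u ∈ supp x, τ u ∈ supp y := by
    intro u hu
    show y (τ u) ≠ none
    rw [h.t1 u hu]
    exact hu
  have hτu_ne : ∀ u ∈ supp x, τ u ≠ c' := by
    intro u hu h'
    have h1 := h.t1 u hu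
    rw [h', hc'] at h1
    exact hu h1.symm
  by_cases hnear : ∃ c₀ ∈ supp x, dd c' (τ c₀) ≤ D F k
  · -- pull the move back through τ
    obtain ⟨c₀, hc₀, hcc₀⟩ := hnear
    set w := τ c₀ - c₀ with hw
    have hτc₀ : τ c₀ = c₀ + w := by rw [hw]; abel
    set c : Cell d := c' - w with hcdef
    have hcsub : c' = c + w := by rw [hcdef]; abel
    have hccd : dd c c₀ ≤ D F k := by
      have : dd (c + w) (τ c₀) = dd c c₀ := by
        apply dd_of_sub_eq
        rw [hτc₀]; abel
      rw [← this, ← hcsub]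
      exact hcc₀
    have hxc : x c = none := by
      by_contra hne
      have hcmem : c ∈ supp x := hne
      have hN1 : τ c = c + w := by
        have h2 := h.t2 c₀ hc₀ c hcmem (by rw [dd_comm] at hccd; omega)
        rw [sub_eq_iff_eq_add] at h2
        rw [h2, hw]; abel
      have := hτu_ne c hcmem
      rw [hN1, ← hcsub] at this
      exact this rfl
    obtain ⟨-, hrel⟩ := relExtNear F h a hc₀ hccd hxc (by rw [← hcsub]; exact hc')
    refine Or.inl ⟨c, hxc, ?_⟩
    rw [hcsub]
    exact hrel
  · -- the move is far from the image: treat it as junk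
    push_neg at hnear
    have r := relMono F h
    have hsy : supp (applyMove y (some (c',a))) = insert c' (supp y) :=
      supp_apply_some y c' a
    refine Or.inr ⟨?_, r.t2, r.t3, ?_, r.t5, r.t6, ?_⟩
    · intro u hu
      rw [apply_some, if_neg (hτu_ne u hu)]
      exact h.t1 u hu
    · intro e he hni u hu
      rw [hsy, Set.mem_insert_iff] at he
      rcases he with he | he
      · subst e
        exact hnear u hu
      · exact r.t4 e he hni u hu
    · obtain ⟨sy, hsy', hcard⟩ := h.fin
      refine ⟨insert c' sy, ?_, ?_⟩
      · rw [Finset.coe_insert, hsy', hsy]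
      · have := Finset.card_insert_le c' sy
        omega

theorem master {Ws : Set (Cell d)} {SZ : ℕ} :
    ∀ (k : ℕ) (P : Bool) (x y : Board d) (τ : Cell d → Cell d),
      Rel F Ws SZ k x y τ → WW m F Set.univ k P x → WW m F Ws k P y := by
  intro k
  induction k with
  | zero =>
    intro P x y τ hrel hx
    cases P
    · exact final_transport F hrel hx
    · exact final_transport F hrel hx
  | succ k ih =>
    intro P x y τ hrel hx
    cases P with
    | true =>
      rcases hx with hf | ⟨mv, hl, _, hx⟩
      · exact Or.inl (final_transport F hrel hf)
      · match mv, hl, hx with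
        | none, _, hx =>
          exact Or.inr ⟨none, trivial, trivial, ih false x y τ (relMono F hrel) hx⟩
        | some (c, a), hl, hx =>
          obtain ⟨-, hxc, ha⟩ := hl
          obtain ⟨c', hyc', hcW, hrel'⟩ := extF m F hrel hxc ha
          exact Or.inr ⟨some (c', a), ⟨Set.mem_univ _, hyc', ha⟩, hcW,
            ih false _ _ _ hrel' hx⟩
    | false =>
      rcases hx with hf | hall
      · exact Or.inl (final_transport F hrel hf)
      · refine Or.inr fun mv hl hw => ?_
        match mv, hl, hw with
        | none, _, _ =>
          exact ih true x y τ (relMono F hrel) (hall none trivial trivial)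
        | some (c', a), hl, hw =>
          obtain ⟨-, hyc', ha⟩ := hl
          rcases extB m F hrel hyc' ha with ⟨c, hxc, hrel'⟩ | hrel'
          · exact ih true _ _ _ hrel'
              (hall (some (c, a)) ⟨Set.mem_univ _, hxc, ha⟩ trivial)
          · exact ih true _ _ _ hrel' (hall none trivial trivial)


lemma inW_univ (mv : MoveD d) : inW Set.univ mv := by
  cases mv with
  | none => trivial
  | some q => exact Set.mem_univ _

lemma WW_succ_true (Ws : Set (Cell d)) (k : ℕ) (x : Board d) :
    WW m F Ws (k+1) true x ↔ isFinal F x ∨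
      ∃ mv, legalMove m Set.univ x mv ∧ inW Ws mv ∧ WW m F Ws k false (applyMove x mv) := by
  constructor <;> (intro h; exact h)

lemma WW_succ_false (Ws : Set (Cell d)) (k : ℕ) (x : Board d) :
    WW m F Ws (k+1) false x ↔ isFinal F x ∨
      ∀ mv, legalMove m Set.univ x mv → inW Ws mv → WW m F Ws k true (applyMove x mv) := by
  constructor <;> (intro h; exact h)

lemma univ_spots (hd : 0 < d) (r : ℕ) (S : Finset (Cell d)) :
    ∃ e : Cell d, ∀ s ∈ S, r < dd e s := by
  obtain ⟨i0⟩ : Nonempty (Fin d) := ⟨⟨0, hd⟩⟩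
  obtain ⟨M, hM⟩ : ∃ M : ℕ, ∀ s ∈ S, (s i0).natAbs ≤ M :=
    ⟨S.sup fun s => (s i0).natAbs, fun s hs => Finset.le_sup (f := fun s => (s i0).natAbs) hs⟩
  obtain ⟨e, he0⟩ : ∃ e : Cell d, e i0 = ((M + r + 1 : ℕ) : ℤ) :=
    ⟨fun i => if i = i0 then ((M + r + 1 : ℕ) : ℤ) else 0, by simp⟩
  refine ⟨e, fun s hs => ?_⟩
  have h1 := hM s hs
  have h2 := coord_le_dd e s i0
  rw [he0] at h2
  omega

lemma ball_finite (s : Cell d) (r : ℕ) : {c : Cell d | dd c s ≤ r}.Finite := by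
  refine Set.Finite.subset
    (Set.Finite.pi (fun i : Fin d => Set.finite_Icc (s i - r) (s i + r))) ?_
  intro c hc
  rw [Set.mem_univ_pi]
  intro i
  have := coord_le_dd c s i
  have hcs : (c i - s i).natAbs ≤ r := le_trans this hc
  simp only [Set.mem_Icc]
  omega

lemma junk_insert (hd : 0 < d) {x : Board d} (hfin : (supp x).Finite) {c : Cell d}
    {a k : ℕ} (hxc : x c = none) (hfar : ∀ s ∈ supp x, D F k < dd c s) (P : Bool)
    (hW : WW m F Set.univ k P x) :
    WW m F Set.univ k P (applyMove x (some (c, a))) := by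
  refine master m F (Ws := Set.univ) (SZ := hfin.toFinset.card + k + 1) k P x
    (applyMove x (some (c,a))) id ?_ hW
  have hsupp : supp (applyMove x (some (c,a))) = insert c (supp x) := supp_apply_some x c a
  refine ⟨?_, ?_, ?_, ?_, ?_, ?_, ?_⟩
  · intro u hu
    have hne : id u ≠ c := by
      intro h'
      rw [show id u = u from rfl] at h'
      subst h'
      exact hu hxc
    rw [apply_some, if_neg hne]
    rfl
  · intro u _ u' _ _
    rfl
  · intro u _ u' _ hdd
    exact hdd
  · intro e he hni u hu
    rw [hsupp, Set.mem_insert_iff] at he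
    rcases he with he | he
    · subst e
      exact hfar u hu
    · exact absurd rfl (hni e he)
  · intro _ _ _ _
    exact Set.mem_univ _
  · intro j _ S _
    obtain ⟨e, he⟩ := univ_spots hd (D F j) S
    exact ⟨e, he, fun _ _ => Set.mem_univ _⟩
  · refine ⟨insert c hfin.toFinset, ?_, ?_⟩
    · rw [Finset.coe_insert, Set.Finite.coe_toFinset, hsupp]
    · have := Finset.card_insert_le c hfin.toFinset
      omega

lemma keyReply (hd : 0 < d) {x : Board d} (hfin : (supp x).Finite)
    (hx : ∀ k, ¬ WW m F Set.univ k false x) :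
    ∃ mv, legalMove m Set.univ x mv ∧
      ∀ k, ¬ WW m F Set.univ k true (applyMove x mv) := by
  by_cases hpass : ∀ k, ¬ WW m F Set.univ k true x
  · exact ⟨none, trivial, fun k => hpass k⟩
  · push_neg at hpass
    obtain ⟨k₁, hk₁⟩ := hpass
    set S : ℕ → Set (MoveD d) := fun k =>
      {mv | legalMove m Set.univ x mv ∧ ¬ WW m F Set.univ k true (applyMove x mv)} with hSdef
    have hSne : ∀ k, (S k).Nonempty := by
      intro k
      by_contra hemp
      rw [Set.not_nonempty_iff_eq_empty] at hemp
      apply hx (k+1)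
      refine Or.inr fun mv hl _ => ?_
      by_contra hnW
      have : mv ∈ S k := ⟨hl, hnW⟩
      rw [hemp] at this
      exact this
    have hSdec : ∀ j k, j ≤ k → S k ⊆ S j := by
      intro j k hjk mv hmv
      exact ⟨hmv.1, fun hW => hmv.2 (WW_mono_le m F _ hjk true _ hW)⟩
    have hSpass : ∀ k, k₁ ≤ k → (none : MoveD d) ∉ S k := by
      intro k hk hmem
      exact hmem.2 (WW_mono_le m F _ hk true x hk₁)
    have hSfar : ∀ k, k₁ ≤ k → ∀ c aa, (some (c,aa)) ∈ S k →
        ∃ s ∈ supp x, dd c s ≤ D F k := by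
      intro k hk c aa hmem
      by_contra hfar
      push_neg at hfar
      obtain ⟨hl, hnW⟩ := hmem
      obtain ⟨-, hxc, haa⟩ := hl
      exact hnW (junk_insert m F hd hfin hxc hfar true
        (WW_mono_le m F _ hk true x hk₁))
    have hSfin : (S k₁).Finite := by
      have hbfin : {c : Cell d | ∃ s ∈ supp x, dd c s ≤ D F k₁}.Finite := by
        have heq : {c : Cell d | ∃ s ∈ supp x, dd c s ≤ D F k₁} =
            ⋃ s ∈ supp x, {c | dd c s ≤ D F k₁} := by
          ext c; simp
        rw [heq]
        exact Set.Finite.biUnion hfin fun s _ => ball_finite s (D F k₁)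
      have hsub : S k₁ ⊆ (fun p : Cell d × ℕ => (some p : MoveD d)) ''
          ({c | ∃ s ∈ supp x, dd c s ≤ D F k₁} ×ˢ Set.Iio m) := by
        intro mv hmv
        match mv with
        | none => exact absurd hmv (hSpass k₁ le_rfl)
        | some (c, aa) =>
          exact ⟨(c, aa), ⟨hSfar k₁ le_rfl c aa hmv, hmv.1.2.2⟩, rfl⟩
      exact Set.Finite.subset (Set.Finite.image _ (Set.Finite.prod hbfin (Set.finite_Iio m)))
        hsub
    choose φ hφ using fun k => hSne (k₁ + k)
    have hφ1 : ∀ k, φ k ∈ S k₁ := fun k => hSdec k₁ (k₁+k) (Nat.le_add_right _ _) (hφ k)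
    haveI : Finite ↥(S k₁) := hSfin.to_subtype
    set f : ℕ → ↥(S k₁) := fun k => ⟨φ k, hφ1 k⟩ with hf
    obtain ⟨mv0, hmv0⟩ := Finite.exists_infinite_fiber f
    have hsets : (f ⁻¹' {mv0}) = {k | φ k = (mv0 : MoveD d)} := by
      ext k
      simp [hf, Set.mem_preimage, Subtype.ext_iff]
    have hinf : Set.Infinite {k | φ k = (mv0 : MoveD d)} := by
      rw [← hsets]
      exact Set.infinite_coe_iff.mp hmv0
    have hmem_all : ∀ k, (mv0 : MoveD d) ∈ S k := by
      intro k
      obtain ⟨k', hk'mem, hk'gt⟩ := hinf.exists_gt k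
      have hφk' : φ k' ∈ S (k₁ + k') := hφ k'
      rw [Set.mem_setOf_eq] at hk'mem
      rw [hk'mem] at hφk'
      exact hSdec k (k₁ + k') (by omega) hφk'
    exact ⟨mv0, (hmem_all 0).1, fun k => (hmem_all k).2⟩

/-- The survival strategy for `B`. -/
noncomputable def stBsafe : Strategy d := fun x =>
  if h : ∃ mv, legalMove m Set.univ x mv ∧
      ∀ k, ¬ WW m F Set.univ k true (applyMove x mv)
  then h.choose else none

lemma play_supp_finite (s : ℕ → Player) (stA stB : Strategy d) (t : ℕ) :
    (supp (play m Set.univ s stA stB t)).Finite := by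
  induction t with
  | zero =>
    have : supp (emptyBoard d) = ∅ := by
      ext c; simp [supp, emptyBoard]
    rw [play, this]
    exact Set.finite_empty
  | succ t ih =>
    rw [play, step]
    split_ifs with hleg
    · cases hmv : (match s t with | Player.A => stA | Player.B => stB)
          (play m Set.univ s stA stB t) with
      | none => exact ih
      | some q =>
        rw [show (q : Cell d × ℕ) = (q.1, q.2) from rfl, supp_apply_some]
        exact ih.insert _
    · exact ih

lemma play_colors (s : ℕ → Player) (stA stB : Strategy d) (t : ℕ) (c : Cell d) (a : ℕ)
    (hc : play m Set.univ s stA stB t c = some a) : a < m := by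
  induction t generalizing c a with
  | zero => exact absurd hc (by simp [play, emptyBoard])
  | succ t ih =>
    rw [play, step] at hc
    split_ifs at hc with hleg
    · cases hmv : (match s t with | Player.A => stA | Player.B => stB)
          (play m Set.univ s stA stB t) with
      | none =>
        rw [hmv] at hc
        exact ih c a hc
      | some q =>
        rw [hmv] at hc hleg
        rw [show (q : Cell d × ℕ) = (q.1, q.2) from rfl, apply_some] at hc
        split_ifs at hc with hcq
        · cases hc
          exact hleg.2.2
        · exact ih c a hc
    · exact ih c a hc

lemma part3 (hd : 0 < d)
    (hsurv : ∀ k, ¬ WW m F Set.univ k true (emptyBoard d)) (stA : Strategy d) (t : ℕ) :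
    ¬ isFinal F (play m Set.univ alt stA (stBsafe m F) t) := by
  set stB := stBsafe m F with hstB
  have inv : ∀ t, (t % 2 = 0 → ∀ k, ¬ WW m F Set.univ k true (play m Set.univ alt stA stB t)) ∧
      (t % 2 = 1 → ∀ k, ¬ WW m F Set.univ k false (play m Set.univ alt stA stB t)) := by
    intro t
    induction t with
    | zero =>
      constructor
      · intro _ k
        exact hsurv k
      · intro h1
        omega
    | succ t ih =>
      rcases Nat.mod_two_eq_zero_or_one t with ht | ht
      · -- A's turn at time t
        have hAturn : (match alt t with | Player.A => stA | Player.B => stB) = stA := by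
          simp [alt, ht]
        have hA := ih.1 ht
        have hstep : play m Set.univ alt stA stB (t+1) =
            step m Set.univ stA (play m Set.univ alt stA stB t) := by
          rw [play, hAturn]
        constructor
        · intro h1; omega
        · intro _ k
          set x := play m Set.univ alt stA stB t with hx
          rw [hstep, step]
          split_ifs with hleg
          · intro hW
            exact hA (k+1) (Or.inr ⟨stA x, hleg, inW_univ _, hW⟩)
          · intro hW
            exact hA (k+1) (Or.inr ⟨none, trivial, inW_univ _, hW⟩)
      · -- B's turn at time t
        have hBturn : (match alt t with | Player.A => stA | Player.B => stB) = stB := by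
          simp [alt, ht]
        have hB := ih.2 ht
        set x := play m Set.univ alt stA stB t with hx
        have hfin : (supp x).Finite := play_supp_finite m alt stA stB t
        have hex : ∃ mv, legalMove m Set.univ x mv ∧
            ∀ k, ¬ WW m F Set.univ k true (applyMove x mv) := keyReply m F hd hfin hB
        have hmv : stB x = hex.choose := by
          rw [hstB, stBsafe, dif_pos hex]
        have hstep : play m Set.univ alt stA stB (t+1) = applyMove x hex.choose := by
          rw [play, hBturn, step, ← hx, hmv, if_pos hex.choose_spec.1]
        constructor
        · intro _ k
          rw [hstep]
          exact hex.choose_spec.2 k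
        · intro h1
          omega
  intro hfinal
  rcases Nat.mod_two_eq_zero_or_one t with ht | ht
  · exact (inv t).1 ht 0 hfinal
  · exact (inv t).2 ht 0 hfinal


/-! ### Part 5: the windowed strategy -/

/-- window radius -/
def NN (K : ℕ) : ℕ := (K+1) * (2 * D F K + 1) + D F K

noncomputable def WFin (K : ℕ) : Finset (Cell d) :=
  Fintype.piFinset fun _ : Fin d => Finset.Icc (-(NN F K : ℤ)) (NN F K)

lemma window_spots (hd : 0 < d) (K : ℕ) :
    ∀ j ≤ K, ∀ S : Finset (Cell d), S.card ≤ K →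
      ∃ e, (∀ s ∈ S, D F j < dd e s) ∧
        (∀ e', dd e' e ≤ D F j → e' ∈ (↑(WFin F K) : Set (Cell d))) := by
  intro j hj S hS
  obtain ⟨i0⟩ : Nonempty (Fin d) := ⟨⟨0, hd⟩⟩
  set cand : Fin (K+1) → Cell d :=
    fun i => fun t => if t = i0 then ((((i : ℕ)+1) * (2 * D F K + 1) : ℕ) : ℤ) else 0
    with hcand
  have hcand_at : ∀ i : Fin (K+1), ∀ t, cand i t =
      if t = i0 then ((((i : ℕ)+1) * (2 * D F K + 1) : ℕ) : ℤ) else 0 := fun i t => rfl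
  have hDjK : D F j ≤ D F K := D_mono F hj
  have hpair : ∀ i i' : Fin (K+1), i ≠ i' → 2 * D F K < dd (cand i) (cand i') := by
    intro i i' hne
    have h1 := coord_le_dd (cand i) (cand i') i0
    have h2 : cand i i0 - cand i' i0 =
        (((i : ℕ)+1 : ℕ) : ℤ) * (2 * D F K + 1) - (((i' : ℕ)+1 : ℕ) : ℤ) * (2 * D F K + 1) := by
      rw [hcand_at, hcand_at, if_pos rfl, if_pos rfl]
      push_cast
      ring
    have h3 : (cand i i0 - cand i' i0).natAbs =
        ((i : ℕ) + 1 - ((i' : ℕ) + 1) : ℤ).natAbs * (2 * D F K + 1) := by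
      rw [h2]
      rw [show (((i : ℕ)+1 : ℕ) : ℤ) * (2 * D F K + 1) - (((i' : ℕ)+1 : ℕ) : ℤ) * (2 * D F K + 1)
        = ((i : ℕ) + 1 - ((i' : ℕ) + 1) : ℤ) * (2 * D F K + 1) from by push_cast; ring]
      rw [Int.natAbs_mul]
      congr 1 <;> omega
    have h4 : 1 ≤ ((i : ℕ) + 1 - ((i' : ℕ) + 1) : ℤ).natAbs := by
      have : (i : ℕ) ≠ (i' : ℕ) := fun hc => hne (Fin.ext hc)
      omega
    have h5 : 2 * D F K + 1 ≤ (cand i i0 - cand i' i0).natAbs := by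
      rw [h3]
      calc 2 * D F K + 1 = 1 * (2 * D F K + 1) := by ring
        _ ≤ _ := Nat.mul_le_mul_right _ h4
    omega
  by_cases hall : ∀ i : Fin (K+1), ∃ s ∈ S, dd (cand i) s ≤ D F j
  · exfalso
    choose g hg1 hg2 using hall
    have hinj : Set.InjOn g ↑(Finset.univ : Finset (Fin (K+1))) := by
      intro i _ i' _ hgi
      by_contra hne
      have hp := hpair i i' hne
      have t1 := dd_triangle (cand i) (g i) (cand i')
      have t2 : dd (g i) (cand i') = dd (cand i') (g i') := by rw [hgi, dd_comm]
      have := hg2 i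
      have := hg2 i'
      omega
    have hcard := Finset.card_le_card_of_injOn g (fun i _ => hg1 i) hinj
    rw [Finset.card_univ, Fintype.card_fin] at hcard
    omega
  · push_neg at hall
    obtain ⟨i, hi⟩ := hall
    refine ⟨cand i, fun s hs => by have := hi s hs; omega, ?_⟩
    intro e' he'
    rw [Finset.mem_coe, WFin, Fintype.mem_piFinset]
    intro t
    have h1 := coord_le_dd e' (cand i) t
    have h2 : (e' t - cand i t).natAbs ≤ D F K := by omega
    have hbound : cand i t = 0 ∨
        cand i t = ((((i : ℕ)+1) * (2 * D F K + 1) : ℕ) : ℤ) := by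
      rw [hcand_at]
      by_cases ht : t = i0
      · right; rw [if_pos ht]
      · left; rw [if_neg ht]
    have hmul : ((i : ℕ)+1) * (2 * D F K + 1) ≤ (K+1) * (2 * D F K + 1) :=
      Nat.mul_le_mul_right _ (by have := i.isLt; omega)
    have hNN : NN F K = (K+1) * (2 * D F K + 1) + D F K := rfl
    rw [Finset.mem_Icc]
    rcases hbound with hb | hb <;> rw [hb] at h2 <;> constructor <;> omega

variable (K : ℕ)

/-- truncate colours to the alphabet -/
def capm : Option ℕ → Option ℕ := fun o => o.bind fun a => if a < m then some a else none

lemma capm_lt {o : Option ℕ} {a : ℕ} (h : capm m o = some a) : a < m := by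
  rcases o with - | b
  · simp [capm] at h
  · simp only [capm, Option.bind_some] at h
    split_ifs at h with hb
    exact (Option.some_inj.mp h) ▸ hb

lemma capm_eq_some {o : Option ℕ} {a : ℕ} (h : capm m o = some a) : o = some a := by
  rcases o with - | b
  · simp [capm] at h
  · simp only [capm, Option.bind_some] at h
    split_ifs at h with hb
    exact h

lemma capm_none {o : Option ℕ} (h : capm m o = none) (hlt : ∀ b, o = some b → b < m) :
    o = none := by
  rcases o with - | b
  · rfl
  · simp only [capm, Option.bind_some] at h
    rw [if_pos (hlt b rfl)] at h
    cases h

/-- the window view of a board -/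
noncomputable def viewW (x : Board d) : Board d := fun c => if c ∈ WFin F K then capm m (x c) else none

/-- windowed game rank -/
noncomputable def rho (v : Board d) : ℕ :=
  sInf {k | WW m F (↑(WFin F K) : Set (Cell d)) k true v}

/-- the table move -/
noncomputable def Amove (v : Board d) : MoveD d :=
  if h : ∃ mv, legalMove m Set.univ v mv ∧ inW (↑(WFin F K) : Set (Cell d)) mv ∧
      WW m F (↑(WFin F K) : Set (Cell d)) (rho m F K v - 1) false (applyMove v mv)
  then h.choose else none

lemma viewW_le (x : Board d) (c : Cell d) (a : ℕ) (h : viewW m F K x c = some a) :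
    x c = some a := by
  by_cases hw : c ∈ WFin F K
  · rw [viewW, if_pos hw] at h
    exact capm_eq_some m h
  · rw [viewW, if_neg hw] at h
    cases h

lemma final_mono {v x : Board d} (hle : ∀ c a, v c = some a → x c = some a)
    (hf : isFinal F v) : isFinal F x := by
  obtain ⟨p, hp, t, hocc⟩ := hf
  exact ⟨p, hp, t, fun q hq => hle _ _ (hocc q hq)⟩

lemma viewW_apply_in {x : Board d} {c : Cell d} {a : ℕ} (hc : c ∈ WFin F K) (ha : a < m) :
    viewW m F K (applyMove x (some (c, a))) = applyMove (viewW m F K x) (some (c, a)) := by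
  funext e
  by_cases he : e = c
  · subst he
    simp [viewW, apply_some, hc, capm, ha]
  · simp [viewW, apply_some, he]

lemma viewW_apply_out {x : Board d} {c : Cell d} {a : ℕ} (hc : c ∉ WFin F K) :
    viewW m F K (applyMove x (some (c, a))) = viewW m F K x := by
  funext e
  by_cases he : e = c
  · subst he
    simp [viewW, apply_some, hc]
  · simp [viewW, apply_some, he]


lemma bstep (stA stB : Strategy d) (t : ℕ) (ht : (t+1) % 2 = 1) {r : ℕ}
    (hWB : WW m F (↑(WFin F K) : Set (Cell d)) (r+1) false
      (viewW m F K (play m Set.univ alt stA stB (t+1)))) :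
    isFinal F (viewW m F K (play m Set.univ alt stA stB (t+1))) ∨
      WW m F (↑(WFin F K) : Set (Cell d)) r true
        (viewW m F K (play m Set.univ alt stA stB (t+1+1))) := by
  set x1 := play m Set.univ alt stA stB (t+1) with hx1
  rcases hWB with hf | hall
  · exact Or.inl hf
  · right
    have hBturn : (match alt (t+1) with | Player.A => stA | Player.B => stB) = stB := by
      simp [alt, ht]
    rw [play, hBturn, step, ← hx1]
    split_ifs with hlegB
    · cases hmb : stB x1 with
      | none =>
        exact hall none trivial trivial
      | some q =>
        obtain ⟨cb, b⟩ := q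
        rw [hmb] at hlegB
        obtain ⟨-, hx1cb, hb⟩ := hlegB
        by_cases hcb : cb ∈ WFin F K
        · rw [viewW_apply_in m F K hcb hb]
          refine hall (some (cb,b)) ⟨Set.mem_univ _, ?_, hb⟩ (Finset.mem_coe.2 hcb)
          rw [viewW, if_pos hcb, hx1cb]
          rfl
        · rw [viewW_apply_out m F K hcb]
          exact hall none trivial trivial
    · exact hall none trivial trivial

lemma descend (stA stB : Strategy d)
    (hstA : ∀ x, stA x = Amove m F K (viewW m F K x)) :
    ∀ k t, t % 2 = 0 →
      WW m F (↑(WFin F K) : Set (Cell d)) k true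
        (viewW m F K (play m Set.univ alt stA stB t)) →
      ∃ s, isFinal F (play m Set.univ alt stA stB s) := by
  intro k
  induction k using Nat.strong_induction_on with
  | _ k IH =>
    intro t ht hWW
    set x := play m Set.univ alt stA stB t with hx
    set v := viewW m F K x with hv
    have hvle : ∀ c aa, v c = some aa → x c = some aa := fun c aa h =>
      viewW_le m F K x c aa h
    by_cases hfv : isFinal F v
    · exact ⟨t, final_mono F hvle hfv⟩
    have hmemr : WW m F (↑(WFin F K) : Set (Cell d)) (rho m F K v) true v :=
      Nat.sInf_mem (⟨k, hWW⟩ : {j | WW m F (↑(WFin F K) : Set (Cell d)) j true v}.Nonempty)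
    have hler : rho m F K v ≤ k := Nat.sInf_le hWW
    cases hr : rho m F K v with
    | zero =>
      rw [hr] at hmemr
      exact absurd hmemr hfv
    | succ r =>
      rw [hr] at hmemr
      rcases hmemr with hf | hexmv
      · exact absurd hf hfv
      · have hex : ∃ mv, legalMove m Set.univ v mv ∧
            inW (↑(WFin F K) : Set (Cell d)) mv ∧
            WW m F (↑(WFin F K) : Set (Cell d)) (rho m F K v - 1) false (applyMove v mv) := by
          rw [hr]
          simpa using hexmv
        have hAmv : Amove m F K v = hex.choose := by
          rw [Amove, dif_pos hex]
        obtain ⟨hleg, hinw, hWB⟩ := hex.choose_spec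
        have hstAx : stA x = hex.choose := by
          rw [hstA x, ← hv, hAmv]
        have hAturn : (match alt t with | Player.A => stA | Player.B => stB) = stA := by
          simp [alt, ht]
        have hcont : WW m F (↑(WFin F K) : Set (Cell d)) r false
            (viewW m F K (play m Set.univ alt stA stB (t+1))) := by
          rcases hq : hex.choose with - | ⟨c, aa⟩
          · rw [hq] at hWB hstAx
            rw [hr, Nat.succ_sub_one] at hWB
            have hx1 : play m Set.univ alt stA stB (t+1) = x := by
              rw [play, hAturn, ← hx, step, hstAx]
              simp [legalMove, applyMove]
            rw [hx1, ← hv]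
            exact hWB
          · rw [hq] at hWB hstAx hleg hinw
            rw [hr, Nat.succ_sub_one] at hWB
            obtain ⟨-, hvc, haa⟩ := hleg
            have hcw : c ∈ WFin F K := Finset.mem_coe.1 hinw
            have hxc : x c = none := by
              rw [hv, viewW, if_pos hcw] at hvc
              exact capm_none m hvc fun b hb => play_colors m alt stA stB t c b (hx ▸ hb)
            have hlegx : legalMove m Set.univ x (some (c, aa)) :=
              ⟨Set.mem_univ _, hxc, haa⟩
            have hx1 : play m Set.univ alt stA stB (t+1) = applyMove x (some (c, aa)) := by
              rw [play, hAturn, ← hx, step, hstAx, if_pos hlegx]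
            rw [hx1, viewW_apply_in m F K hcw haa, ← hv]
            exact hWB
        cases r with
        | zero =>
          refine ⟨t+1, final_mono F (fun c aa h => viewW_le m F K _ c aa h) hcont⟩
        | succ r' =>
          rcases bstep m F K stA stB t (by omega) hcont with hf1 | hWW2
          · exact ⟨t+1, final_mono F (fun c aa h => viewW_le m F K _ c aa h) hf1⟩
          · exact IH r' (by omega) (t+1+1) (by omega) hWW2

lemma bridge (hd : 0 < d) (hW : WW m F Set.univ K true (emptyBoard d)) :
    WW m F (↑(WFin F K) : Set (Cell d)) K true (emptyBoard d) := by
  have hsupp : supp (emptyBoard d) = ∅ := by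
    ext c
    simp [supp, emptyBoard]
  refine master m F (Ws := (↑(WFin F K) : Set (Cell d))) (SZ := K) K true
    (emptyBoard d) (emptyBoard d) id ?_ hW
  refine ⟨?_, ?_, ?_, ?_, ?_, ?_, ?_⟩
  · intro c hc
    rw [hsupp] at hc
    exact absurd hc (Set.notMem_empty c)
  · intro c hc
    rw [hsupp] at hc
    exact absurd hc (Set.notMem_empty c)
  · intro c hc
    rw [hsupp] at hc
    exact absurd hc (Set.notMem_empty c)
  · intro e he
    rw [hsupp] at he
    exact absurd he (Set.notMem_empty e)
  · intro c hc
    rw [hsupp] at hc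
    exact absurd hc (Set.notMem_empty c)
  · intro j hj S hS
    exact window_spots F hd K j hj S hS
  · exact ⟨∅, by rw [Finset.coe_empty, hsupp], by simp⟩


/-! ### computability of the windowed strategy -/

noncomputable def WL : List (Cell d) := (WFin F K).toList

def tbAux (l : PatternCode d) (w : Cell d) : Option ℕ :=
  l.foldr (fun q acc => if q.1 = w then some q.2 else acc) none

lemma tbAux_eq (l : PatternCode d) (w : Cell d) : tbAux l w = toBoard l w := by
  induction l with
  | nil => rfl
  | cons q l ih =>
    show (if q.1 = w then some q.2 else tbAux l w) = _
    by_cases h : q.1 = w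
    · rw [if_pos h, toBoard, List.find?_cons_of_pos (by simp [h])]
      rfl
    · rw [if_neg h, toBoard, List.find?_cons_of_neg (by simp [h])]
      exact ih

noncomputable def profileL (x : Board d) : List (Option ℕ) := (WL F K).map fun w => capm m (x w)

noncomputable def profile (x : Board d) : ℕ := Encodable.encode (profileL m F K x)

noncomputable def boardOf (n : ℕ) : Board d := fun c =>
  (((WL F K).zip ((Encodable.decode (α := List (Option ℕ)) n).getD [])).lookup c).join

lemma lookup_zip_map {α β : Type} [DecidableEq α] (L : List α) (g : α → β) (c : α) :
    ((L.zip (L.map g)).lookup c) = if c ∈ L then some (g c) else none := by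
  induction L with
  | nil => simp
  | cons a L ih =>
    rw [List.map_cons, List.zip_cons_cons, List.lookup_cons]
    by_cases h : c = a
    · subst h
      simp
    · have hb : (c == a) = false := by simp [h]
      rw [hb]
      simp only [List.mem_cons, h, false_or]
      exact ih

lemma boardOf_profile (x : Board d) : boardOf F K (profile m F K x) = viewW m F K x := by
  funext c
  rw [boardOf, profile, Encodable.encodek, Option.getD_some, profileL, lookup_zip_map]
  by_cases h : c ∈ WFin F K
  · have h' : c ∈ WL F K := Finset.mem_toList.2 h
    rw [if_pos h', viewW, if_pos h]
    rfl
  · have h' : c ∉ WL F K := fun hc => h (Finset.mem_toList.1 hc)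
    rw [if_neg h', viewW, if_neg h]
    rfl

noncomputable def sigma5 : ℕ → MoveD d := fun n => Amove m F K (boardOf F K n)

noncomputable def stA5 : Strategy d := fun x => sigma5 m F K (profile m F K x)

lemma stA5_eq (x : Board d) : stA5 m F K x = Amove m F K (viewW m F K x) := by
  rw [stA5, sigma5, boardOf_profile]

noncomputable def piL : PatternCode d → ℕ := fun l =>
  Encodable.encode ((WL F K).map fun w => capm m (tbAux l w))

lemma piL_eq (l : PatternCode d) : piL m F K l = profile m F K (toBoard l) := by
  rw [piL, profile, profileL]
  congr 1
  exact List.map_congr_left fun w _ => by rw [tbAux_eq]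

noncomputable def f5 : PatternCode d → MoveD d := fun l => sigma5 m F K (piL m F K l)

lemma f5_eq (l : PatternCode d) : f5 m F K l = stA5 m F K (toBoard l) := by
  rw [f5, piL_eq, stA5]

lemma primrec_tbAux : Primrec₂ (tbAux (d := d)) := by
  have hpred : PrimrecPred fun z : (PatternCode d × Cell d) × ((Cell d × ℕ) × Option ℕ) =>
      z.2.1.1 = z.1.2 :=
    Primrec.eq.comp (Primrec.fst.comp (Primrec.fst.comp Primrec.snd))
      (Primrec.snd.comp Primrec.fst)
  have h : Primrec₂ fun (p : PatternCode d × Cell d) (q : (Cell d × ℕ) × Option ℕ) =>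
      if q.1.1 = p.2 then some q.1.2 else q.2 :=
    Primrec.ite hpred
      (Primrec.option_some.comp (Primrec.snd.comp (Primrec.fst.comp Primrec.snd)))
      (Primrec.snd.comp Primrec.snd)
  have hfold := Primrec.list_foldr (f := fun p : PatternCode d × Cell d => p.1)
    (g := fun _ => (none : Option ℕ))
    (h := fun p q => if q.1.1 = p.2 then some q.1.2 else q.2)
    Primrec.fst (Primrec.const none) h
  exact hfold.to₂.of_eq fun l w => rfl

lemma primrec_capm : Primrec (capm m) := by
  have h : Primrec₂ fun (_ : Option ℕ) (a : ℕ) => if a < m then some a else none := by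
    refine Primrec.ite ?_ (Primrec.option_some.comp Primrec.snd) (Primrec.const none)
    exact Primrec.nat_lt.comp Primrec.snd (Primrec.const m)
  exact (Primrec.option_bind Primrec.id h).of_eq fun o => rfl

lemma computable_piL : Computable (piL m F K) := by
  have hmap : Primrec fun l : PatternCode d =>
      (WL F K).map fun w => capm m (tbAux l w) := by
    refine Primrec.list_map (Primrec.const (WL F K)) ?_
    exact (primrec_capm m).comp (primrec_tbAux (d := d))
  exact (Primrec.encode.comp hmap).to_comp

/-- possible encodings of window profiles -/
noncomputable def rangeS : Finset ℕ :=
  Finset.image (fun vf : Fin (WL F K).length → Option (Fin m) =>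
    Encodable.encode (List.ofFn fun i => (vf i).map Fin.val)) Finset.univ

lemma piL_mem_rangeS (l : PatternCode d) : piL m F K l ∈ rangeS m F K := by
  classical
  set g : Cell d → Option ℕ := fun w => capm m (tbAux l w) with hg
  have hvf : ∀ i : Fin (WL F K).length, ∃ o : Option (Fin m),
      o.map Fin.val = g ((WL F K).get i) := by
    intro i
    cases hc : g ((WL F K).get i) with
    | none => exact ⟨none, rfl⟩
    | some a =>
      have ha : a < m := capm_lt m hc
      exact ⟨some ⟨a, ha⟩, rfl⟩
  choose vf hvf using hvf
  rw [rangeS, Finset.mem_image]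
  refine ⟨vf, Finset.mem_univ _, ?_⟩
  have h1 : (List.ofFn fun i => (vf i).map Fin.val) =
      List.ofFn (g ∘ (WL F K).get) := by
    congr 1
    funext i
    exact hvf i
  have h2 : (WL F K).map g = List.ofFn (g ∘ (WL F K).get) := by
    rw [← List.map_ofFn, List.ofFn_get]
  rw [piL, h1, ← h2]

lemma comp_finite_range {α β : Type} [Primcodable α] [Primcodable β] [Inhabited β]
    (σ : ℕ → β) : ∀ (S : Finset ℕ) (π : α → ℕ), Computable π → (∀ a, π a ∈ S) →
    Computable fun a => σ (π a) := by
  intro S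
  induction S using Finset.induction_on with
  | empty =>
    intro π hπ hS
    have : (fun a => σ (π a)) = fun _ => (default : β) :=
      funext fun a => absurd (hS a) (Finset.notMem_empty _)
    rw [this]
    exact Computable.const _
  | @insert a S' hnotin ih =>
    intro π hπ hS
    have hc : Computable fun x => decide (π x = a) :=
      (Primrec.eq.decide.to_comp).comp hπ (Computable.const a)
    rcases S'.eq_empty_or_nonempty with rfl | ⟨b, hb⟩
    · have : (fun x => σ (π x)) = fun _ => σ a := by
        funext x
        have := hS x
        simp only [Finset.mem_insert, Finset.notMem_empty, or_false] at this
        rw [this]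
      rw [this]
      exact Computable.const _
    · set π' : α → ℕ := fun x => bif decide (π x = a) then b else π x with hπ'def
      have hπ' : Computable π' := Computable.cond hc (Computable.const b) hπ
      have hS' : ∀ x, π' x ∈ S' := by
        intro x
        by_cases h : π x = a
        · simp [hπ'def, h, hb]
        · simp only [hπ'def, decide_eq_false h, Bool.cond_false]
          rcases Finset.mem_insert.1 (hS x) with h' | h'
          · exact absurd h' h
          · exact h'
      have hmain := ih π' hπ' hS'
      have heq : (fun x => σ (π x)) =
          fun x => bif decide (π x = a) then σ a else σ (π' x) := by
        funext x
        by_cases h : π x = a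
        · simp [hπ'def, h]
        · simp [hπ'def, h]
      rw [heq]
      exact Computable.cond hc (Computable.const _) hmain

lemma computable_f5 : Computable (f5 m F K) :=
  comp_finite_range (sigma5 m F K) (rangeS m F K) (piL m F K) (computable_piL m F K)
    (piL_mem_rangeS m F K)

lemma viewW_empty : viewW m F K (emptyBoard d) = emptyBoard d := by
  funext c
  simp [viewW, emptyBoard, capm]

/-- Part 5: a certificate gives a computable winning strategy. -/
lemma part5 (hd : 0 < d) (K : ℕ) (hcert : WW m F Set.univ K true (emptyBoard d)) :
    ∃ stA : Strategy d, ComputableStrategy stA ∧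
      ∀ stB : Strategy d, ∃ t : ℕ, isFinal F (play m Set.univ alt stA stB t) := by
  have hWcert := bridge m F K hd hcert
  refine ⟨stA5 m F K, ⟨f5 m F K, computable_f5 m F K, fun l => f5_eq m F K l⟩, ?_⟩
  intro stB
  have h0 : viewW m F K (play m Set.univ alt (stA5 m F K) stB 0) = emptyBoard d := by
    rw [play, viewW_empty]
  exact descend m F K (stA5 m F K) stB (fun x => stA5_eq m F K x) K 0 (by omega)
    (by rw [h0]; exact hWcert)

end Game

end DG

/-- If `A` has a winning strategy in the Domino game
`Γ(𝒜, ℱ, ℤ^d)`, then `A` has a computable winning strategy. -/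
theorem aWins_computable_strategy (d m : ℕ) (F : List (PatternCode d))
    (h : AWins m F Set.univ alt) :
    ∃ stA : Strategy d, ComputableStrategy stA ∧
      ∀ stB : Strategy d, ∃ t : ℕ, isFinal F (play m Set.univ alt stA stB t) := by
  classical
  by_cases h0 : isFinal F (emptyBoard d)
  · exact ⟨fun _ => none, ⟨fun _ => none, Computable.const _, fun l => rfl⟩,
      fun stB => ⟨0, h0⟩⟩
  · cases d with
    | zero =>
      have hcell : ∀ c c' : Cell 0, c = c' := fun c c' => funext fun i => i.elim0
      obtain ⟨stA, hstA⟩ := h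
      obtain ⟨t, hf⟩ := hstA fun _ => none
      obtain ⟨p, hp, tt, hocc⟩ := hf
      cases p with
      | nil =>
        exact absurd ⟨[], hp, 0, fun q hq => absurd hq List.not_mem_nil⟩ h0
      | cons q0 p' =>
        have hx0 : play m Set.univ alt stA (fun _ => none) t (tt + q0.1) = some q0.2 :=
          hocc q0 (List.mem_cons_self)
        have ha : q0.2 < m := DG.play_colors m alt stA _ t _ q0.2 hx0
        have hcol : ∀ q ∈ q0 :: p', q.2 = q0.2 := by
          intro q hq
          have h1 := hocc q hq
          rw [hcell (tt + q.1) (tt + q0.1), hx0] at h1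
          exact (Option.some_inj.mp h1).symm
        set c0 : Cell 0 := fun i => i.elim0 with hc0
        set st : Strategy 0 := fun x => if x c0 = none then some (c0, q0.2) else none
          with hst
        refine ⟨st, ?_, ?_⟩
        · -- computability
          set π0 : PatternCode 0 → ℕ :=
            fun l => bif (DG.tbAux l c0).isSome then 1 else 0 with hπ0
          set σ0 : ℕ → MoveD 0 := fun nn => if nn = 0 then some (c0, q0.2) else none
            with hσ0
          have hπ0c : Computable π0 := by
            have h1 : Primrec fun l : PatternCode 0 => DG.tbAux l c0 :=
              DG.primrec_tbAux.comp Primrec.id (Primrec.const c0)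
            exact (Primrec.cond (Primrec.option_isSome.comp h1) (Primrec.const 1)
              (Primrec.const 0)).to_comp
          have hrange : ∀ l, π0 l ∈ ({0, 1} : Finset ℕ) := by
            intro l
            rw [hπ0]
            cases hsm : (DG.tbAux l c0).isSome <;> simp [hsm]
          refine ⟨fun l => σ0 (π0 l),
            DG.comp_finite_range σ0 {0, 1} π0 hπ0c hrange, fun l => ?_⟩
          show σ0 (π0 l) = st (toBoard l)
          have htb := DG.tbAux_eq l c0
          cases hc : DG.tbAux l c0 with
          | none =>
            have hb : toBoard l c0 = none := by rw [← htb, hc]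
            simp [hπ0, hσ0, hst, hc, hb]
          | some b =>
            have hb : toBoard l c0 = some b := by rw [← htb, hc]
            simp [hπ0, hσ0, hst, hc, hb]
        · intro stB
          have halt0 : alt 0 = Player.A := by simp [alt]
          have hmv : st (emptyBoard 0) = some (c0, q0.2) := by
            rw [hst]
            simp [emptyBoard]
          have hleg : legalMove m Set.univ (emptyBoard 0) (some (c0, q0.2)) :=
            ⟨Set.mem_univ _, rfl, ha⟩
          have hAturn : (match alt 0 with | Player.A => st | Player.B => stB) = st := by
            simp [alt]
          have h1 : play m Set.univ alt st stB 1 =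
              applyMove (emptyBoard 0) (some (c0, q0.2)) := by
            rw [play, hAturn, step,
              show play m Set.univ alt st stB 0 = emptyBoard 0 from rfl, hmv,
              if_pos hleg]
          refine ⟨1, q0 :: p', hp, c0, fun q hq => ?_⟩
          have hcq : c0 + q.1 = c0 := hcell _ _
          rw [h1, hcq, DG.apply_some, if_pos rfl, hcol q hq]
    | succ n =>
      have hd : 0 < n + 1 := Nat.succ_pos n
      by_cases hcert : ∃ K, DG.WW m F Set.univ K true (emptyBoard (n+1))
      · obtain ⟨K, hK⟩ := hcert
        exact DG.part5 m F hd K hK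
      · exfalso
        push_neg at hcert
        obtain ⟨stA, hstA⟩ := h
        obtain ⟨t, hf⟩ := hstA (DG.stBsafe m F)
        exact DG.part3 m F hd (fun k => hcert k) stA t hf
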